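/- Suppose x_{k+1} = A x_k + B u_k, y_k = C x_k + D u_k, with P ≻ 0, γ ∈ (0,1), S symmetric, and suppose the matrix inequality [I 0; A B]ᵀ [γP 0; 0 -P] [I 0; A B] + [C D; 0 I]ᵀ S [C D; 0 I] ⪰ 0 holds. Then for any two trajectories whose input/output differences satisfy [Δy_k; Δu_k]ᵀ S [Δy_k; Δu_k] ≤ 0 for all k, the storage V(Δx) = Δxᵀ P Δx satisfies V(Δx_{k+1}) ≤ γ V(Δx_k) for all k, i.e., the interconnection is exponentially contracting with rate γ. -/

import Mathlib

open Matrix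

/-- If the `γ`-contraction LMI holds, then along any two trajectories whose
input/output increments satisfy the sector bound `[Δy;Δu]ᵀ S [Δy;Δu] ≤ 0`,
the quadratic storage contracts exponentially with rate `γ`. -/
theorem LMI_implies_exponential_contraction
    (n m p : ℕ) (A : Matrix (Fin n) (Fin n) ℝ) (B : Matrix (Fin n) (Fin m) ℝ)
    (C : Matrix (Fin p) (Fin n) ℝ) (D : Matrix (Fin p) (Fin m) ℝ)
    (S : Matrix (Fin p ⊕ Fin m) (Fin p ⊕ Fin m) ℝ) (hS : S.IsSymm)
    (P : Matrix (Fin n) (Fin n) ℝ) (hP : P.PosDef)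
    (γ : ℝ) (hγ0 : 0 < γ) (hγ1 : γ < 1)
    (hLMI :
      ((Matrix.fromBlocks (1 : Matrix (Fin n) (Fin n) ℝ) 0 A B)ᵀ *
            Matrix.fromBlocks (γ • P) 0 0 (-P) *
            Matrix.fromBlocks (1 : Matrix (Fin n) (Fin n) ℝ) 0 A B +
          (Matrix.fromBlocks C D 0 (1 : Matrix (Fin m) (Fin m) ℝ))ᵀ * S *
            Matrix.fromBlocks C D 0 (1 : Matrix (Fin m) (Fin m) ℝ)).PosSemidef)
    (x₁ x₂ : ℕ → Fin n → ℝ) (u₁ u₂ : ℕ → Fin m → ℝ) (y₁ y₂ : ℕ → Fin p → ℝ)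
    (hx₁ : ∀ k, x₁ (k + 1) = A.mulVec (x₁ k) + B.mulVec (u₁ k))
    (hy₁ : ∀ k, y₁ k = C.mulVec (x₁ k) + D.mulVec (u₁ k))
    (hx₂ : ∀ k, x₂ (k + 1) = A.mulVec (x₂ k) + B.mulVec (u₂ k))
    (hy₂ : ∀ k, y₂ k = C.mulVec (x₂ k) + D.mulVec (u₂ k))
    (hsec : ∀ k,
      Sum.elim (y₁ k - y₂ k) (u₁ k - u₂ k) ⬝ᵥ
        S.mulVec (Sum.elim (y₁ k - y₂ k) (u₁ k - u₂ k)) ≤ 0) :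
    ∀ k,
      (x₁ (k + 1) - x₂ (k + 1)) ⬝ᵥ P.mulVec (x₁ (k + 1) - x₂ (k + 1)) ≤
        γ * ((x₁ k - x₂ k) ⬝ᵥ P.mulVec (x₁ k - x₂ k)) := by
  intro k
  set Δx := x₁ k - x₂ k with hΔx
  set Δu := u₁ k - u₂ k with hΔu
  set Δy := y₁ k - y₂ k with hΔy
  set Δx' := x₁ (k+1) - x₂ (k+1) with hΔx'
  have hstep : Δx' = A.mulVec Δx + B.mulVec Δu := by
    simp only [hΔx', hx₁, hx₂, hΔx, hΔu, Matrix.mulVec_sub]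
    abel
  have hout : Δy = C.mulVec Δx + D.mulVec Δu := by
    simp only [hΔy, hy₁, hy₂, hΔx, hΔu, Matrix.mulVec_sub]
    abel
  have h := (Matrix.posSemidef_iff_dotProduct_mulVec.mp hLMI).2 (Sum.elim Δx Δu)
  simp only [star_trivial] at h
  have hF1 : (Matrix.fromBlocks (1 : Matrix (Fin n) (Fin n) ℝ) 0 A B).mulVec
      (Sum.elim Δx Δu) = Sum.elim Δx Δx' := by
    rw [Matrix.fromBlocks_mulVec, hstep]
    simp
  have hF2 : (Matrix.fromBlocks C D 0 (1 : Matrix (Fin m) (Fin m) ℝ)).mulVec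
      (Sum.elim Δx Δu) = Sum.elim Δy Δu := by
    rw [Matrix.fromBlocks_mulVec, hout]
    simp
  rw [Matrix.add_mulVec, dotProduct_add, ← Matrix.mulVec_mulVec,
      ← Matrix.mulVec_mulVec, ← Matrix.mulVec_mulVec, ← Matrix.mulVec_mulVec,
      dotProduct_mulVec _ (Matrix.fromBlocks (1 : Matrix (Fin n) (Fin n) ℝ) 0 A B)ᵀ,
      dotProduct_mulVec _ (Matrix.fromBlocks C D 0 (1 : Matrix (Fin m) (Fin m) ℝ))ᵀ,
      Matrix.vecMul_transpose, Matrix.vecMul_transpose, hF1, hF2] at h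
  have hsk := hsec k
  rw [show Sum.elim (y₁ k - y₂ k) (u₁ k - u₂ k) = Sum.elim Δy Δu from rfl] at hsk
  have hmain : (Matrix.fromBlocks (γ • P) 0 0 (-P)).mulVec (Sum.elim Δx Δx')
      = Sum.elim (γ • P.mulVec Δx) (-(P.mulVec Δx')) := by
    rw [Matrix.fromBlocks_mulVec]
    simp [Matrix.smul_mulVec, Matrix.neg_mulVec]
  rw [hmain, sumElim_dotProduct_sumElim, dotProduct_smul, dotProduct_neg] at h
  simp only [smul_eq_mul] at h
  linarith
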